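/- Suppose {φ_n}, {ψ_n} are linearly dense in H with ⟨φ_n, ψ_n⟩ = 1 and there exists a positive invertible T ∈ B(H) with Tφ_n = ψ_n. If {(φ_n, ψ_n)} and {(ψ_n, φ_n)} are both effective pairs, then the auxiliary sequences {g_n} and {g̃_n} are canonical dual frames, and T⁻¹ is the frame operator of {g_n}. -/

import Mathlib

open scoped ComplexInnerProductSpace
open Filter Topology Finset

variable {H : Type*} [NormedAddCommGroup H] [InnerProductSpace ℂ H] [CompleteSpace H]

/-- The sequence of approximations produced by the dual Kaczmarz algorithm with
analysis sequence `φ` and synthesis sequence `ψ`, applied to `x`.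
(Paper's `⟨a, b⟩`, linear in the first slot, is Mathlib's `⟪b, a⟫`.) -/
noncomputable def kacz (φ ψ : ℕ → H) (x : H) : ℕ → H
  | 0 => ⟪φ 0, x⟫ • ψ 0
  | n + 1 => kacz φ ψ x n + ⟪φ (n + 1), x - kacz φ ψ x n⟫ • ψ (n + 1)

/-- `(φ, ψ)` is an effective pair: the dual Kaczmarz approximations converge to `x`
for every `x`. -/
def EffectivePair (φ ψ : ℕ → H) : Prop :=
  ∀ x : H, Filter.Tendsto (kacz φ ψ x) Filter.atTop (nhds x)

/-- `f` is a frame with bounds `0 < A ≤ B`. -/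
def IsFrame (f : ℕ → H) : Prop :=
  ∃ A B : ℝ, 0 < A ∧ A ≤ B ∧
    ∀ x : H, A * ‖x‖ ^ 2 ≤ ∑' n, ‖⟪f n, x⟫‖ ^ 2 ∧ ∑' n, ‖⟪f n, x⟫‖ ^ 2 ≤ B * ‖x‖ ^ 2

set_option linter.unusedVariables false
set_option linter.unusedSectionVars false
set_option maxHeartbeats 1000000

-- step lemma
lemma tel_step (T : H ≃L[ℂ] H) (φn ψn : H) (hTψ : T.symm ψn = φn)
    (hsym : ∀ a b : H, ⟪T.symm a, b⟫ = ⟪a, T.symm b⟫)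
    (hφψ : ⟪φn, ψn⟫ = 1) (u v : H) :
    ⟪T.symm (u - ⟪φn, u⟫ • ψn), v - ⟪φn, v⟫ • ψn⟫
      = ⟪T.symm u, v⟫ - ⟪u, φn⟫ * ⟪φn, v⟫ := by
  have h1 : ⟪T.symm u, ψn⟫ = ⟪u, φn⟫ := by rw [hsym, hTψ]
  have h2 : (⟪T.symm ψn, v⟫ : ℂ) = ⟪φn, v⟫ := by rw [hTψ]
  have h3 : (⟪T.symm ψn, ψn⟫ : ℂ) = 1 := by rw [hTψ, hφψ]
  have hconj : (starRingEnd ℂ) ⟪φn, u⟫ = ⟪u, φn⟫ := inner_conj_symm _ _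
  rw [map_sub, map_smul, inner_sub_left, inner_sub_right, inner_sub_right,
    inner_smul_right, inner_smul_left, inner_smul_left, inner_smul_right,
    h1, h2, h3, hconj]
  ring

lemma kacz_sum (φ ψ g : ℕ → H) (hg0 : g 0 = φ 0)
    (hg : ∀ n, g (n + 1)
        = φ (n + 1) - ∑ k ∈ Finset.range (n + 1), ⟪ψ k, φ (n + 1)⟫ • g k)
    (x : H) :
    ∀ n, kacz φ ψ x n = ∑ k ∈ Finset.range (n + 1), ⟪g k, x⟫ • ψ k := by
  intro n
  induction n with
  | zero => simp [kacz, hg0]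
  | succ n ih =>
    have hc : ⟪φ (n+1), x - kacz φ ψ x n⟫ = ⟪g (n+1), x⟫ := by
      rw [ih, hg, inner_sub_left, inner_sub_right, inner_sum, sum_inner]
      congr 1
      refine Finset.sum_congr rfl fun k _ => ?_
      rw [inner_smul_left, inner_smul_right, inner_conj_symm]
      ring
    show kacz φ ψ x n + ⟪φ (n+1), x - kacz φ ψ x n⟫ • ψ (n+1) = _
    rw [hc, Finset.sum_range_succ, ih]

lemma kacz_coeff (φ ψ g : ℕ → H) (hg0 : g 0 = φ 0)
    (hg : ∀ n, g (n + 1)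
        = φ (n + 1) - ∑ k ∈ Finset.range (n + 1), ⟪ψ k, φ (n + 1)⟫ • g k)
    (x : H) (n : ℕ) :
    ⟪φ (n+1), x - kacz φ ψ x n⟫ = ⟪g (n+1), x⟫ := by
  rw [kacz_sum φ ψ g hg0 hg x n, hg, inner_sub_left, inner_sub_right, inner_sum, sum_inner]
  congr 1
  refine Finset.sum_congr rfl fun k _ => ?_
  rw [inner_smul_left, inner_smul_right, inner_conj_symm]
  ring

lemma telescope (φ ψ g : ℕ → H) (T : H ≃L[ℂ] H)
    (hg0 : g 0 = φ 0)
    (hg : ∀ n, g (n + 1)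
        = φ (n + 1) - ∑ k ∈ Finset.range (n + 1), ⟪ψ k, φ (n + 1)⟫ • g k)
    (hTψ : ∀ n, T.symm (ψ n) = φ n)
    (hsym : ∀ a b : H, ⟪T.symm a, b⟫ = ⟪a, T.symm b⟫)
    (hφψ : ∀ n, ⟪φ n, ψ n⟫ = 1) (x y : H) :
    ∀ N, ⟪T.symm (x - kacz φ ψ x N), y - kacz φ ψ y N⟫
      = ⟪T.symm x, y⟫ - ∑ k ∈ Finset.range (N + 1), ⟪x, g k⟫ * ⟪g k, y⟫ := by
  intro N
  induction N with
  | zero =>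
    show ⟪T.symm (x - ⟪φ 0, x⟫ • ψ 0), y - ⟪φ 0, y⟫ • ψ 0⟫ = _
    rw [tel_step T (φ 0) (ψ 0) (hTψ 0) hsym (hφψ 0) x y]
    have h1 : ⟪x, φ 0⟫ = ⟪x, g 0⟫ := by rw [hg0]
    have h2 : (⟪φ 0, y⟫ : ℂ) = ⟪g 0, y⟫ := by rw [hg0]
    rw [h1, h2]
    simp
  | succ N ih =>
    have e1 : x - kacz φ ψ x (N+1)
        = (x - kacz φ ψ x N) - ⟪φ (N+1), x - kacz φ ψ x N⟫ • ψ (N+1) := by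
      show x - (kacz φ ψ x N + _) = _
      abel
    have e2 : y - kacz φ ψ y (N+1)
        = (y - kacz φ ψ y N) - ⟪φ (N+1), y - kacz φ ψ y N⟫ • ψ (N+1) := by
      show y - (kacz φ ψ y N + _) = _
      abel
    rw [e1, e2, tel_step T (φ (N+1)) (ψ (N+1)) (hTψ (N+1)) hsym (hφψ (N+1)), ih]
    have h1 : ⟪x - kacz φ ψ x N, φ (N+1)⟫ = ⟪x, g (N+1)⟫ := by
      rw [← inner_conj_symm, kacz_coeff φ ψ g hg0 hg x N, inner_conj_symm]
    have h2 : ⟪φ (N+1), y - kacz φ ψ y N⟫ = ⟪g (N+1), y⟫ :=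
      kacz_coeff φ ψ g hg0 hg y N
    rw [h1, h2]
    conv_rhs => rw [Finset.sum_range_succ]
    ring

lemma gt_eq_T_g (φ ψ g gt : ℕ → H) (T : H ≃L[ℂ] H)
    (hsymT : ∀ a b : H, ⟪(T : H →L[ℂ] H) a, b⟫ = ⟪a, (T : H →L[ℂ] H) b⟫)
    (hTφ : ∀ n, T (φ n) = ψ n)
    (hg0 : g 0 = φ 0)
    (hg : ∀ n, g (n + 1)
        = φ (n + 1) - ∑ k ∈ Finset.range (n + 1), ⟪ψ k, φ (n + 1)⟫ • g k)
    (hgt0 : gt 0 = ψ 0)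
    (hgt : ∀ n, gt (n + 1)
        = ψ (n + 1) - ∑ k ∈ Finset.range (n + 1), ⟪φ k, ψ (n + 1)⟫ • gt k) :
    ∀ n, gt n = T (g n) := by
  intro n
  induction n using Nat.strong_induction_on with
  | _ n ih =>
    match n with
    | 0 => rw [hgt0, hg0, hTφ]
    | (m+1) =>
      rw [hgt m, hg m, map_sub, map_sum]
      congr 1
      · rw [hTφ]
      · refine Finset.sum_congr rfl fun k hk => ?_
        rw [ih k (Finset.mem_range.mp hk), map_smul]
        congr 1
        have : ⟪φ k, ψ (m+1)⟫ = ⟪(T : H →L[ℂ] H) (φ k), φ (m+1)⟫ := by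
          rw [hsymT, ← hTφ (m+1)]; rfl
        rw [this]
        have : (T : H →L[ℂ] H) (φ k) = ψ k := hTφ k
        rw [this]

lemma pos_inner_cs (T : H →L[ℂ] H) (hT : T.IsPositive) (u v : H) :
    (Complex.re ⟪T u, v⟫)^2 ≤ Complex.re ⟪T u, u⟫ * Complex.re ⟪T v, v⟫ := by
  have hsym : ∀ a b : H, ⟪T a, b⟫ = ⟪a, T b⟫ :=
    (hT.1)
  have hpos : ∀ w : H, 0 ≤ Complex.re ⟪T w, w⟫ := fun w => hT.2 w
  have key : ∀ t : ℝ, 0 ≤ Complex.re ⟪T v, v⟫ * (t * t)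
      + (2 * Complex.re ⟪T u, v⟫) * t + Complex.re ⟪T u, u⟫ := by
    intro t
    have h0 := hpos (u + (t : ℂ) • v)
    have hexp : ⟪T (u + (t : ℂ) • v), u + (t : ℂ) • v⟫
        = ⟪T u, u⟫ + (t : ℂ) * ⟪T u, v⟫ + (t : ℂ) * ⟪T v, u⟫
          + (t : ℂ) * (t : ℂ) * ⟪T v, v⟫ := by
      rw [map_add, map_smul, inner_add_left, inner_add_right, inner_add_right,
        inner_smul_left, inner_smul_right, inner_smul_left, inner_smul_right]
      simp [Complex.conj_ofReal]
      ring
    rw [hexp] at h0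
    simp only [Complex.add_re, Complex.mul_re, Complex.mul_im, Complex.ofReal_re,
      Complex.ofReal_im, zero_mul, mul_zero, sub_zero, zero_add, add_zero] at h0
    have hre : Complex.re ⟪T v, u⟫ = Complex.re ⟪T u, v⟫ := by
      have h' : (⟪T v, u⟫ : ℂ) = starRingEnd ℂ ⟪u, T v⟫ := (inner_conj_symm _ _).symm
      rw [h', ← hsym u v, Complex.conj_re]
    rw [hre] at h0
    linarith
  have hd := discrim_le_zero key
  rw [discrim] at hd
  nlinarith [hd]

lemma summable_of_sq_le (v : ℕ → H) (a : ℕ → ℝ) (ha : Summable a)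
    (h : ∀ t : Finset ℕ, ‖∑ n ∈ t, v n‖ ^ 2 ≤ ∑ n ∈ t, a n) : Summable v := by
  rw [summable_iff_vanishing]
  intro e he
  obtain ⟨ε, hε, hball⟩ := Metric.mem_nhds_iff.mp he
  obtain ⟨s, hs⟩ := (summable_iff_vanishing.mp ha) (Metric.ball 0 (ε ^ 2))
    (Metric.ball_mem_nhds _ (by positivity))
  refine ⟨s, fun t ht => ?_⟩
  apply hball
  have h1 := hs t ht
  rw [Metric.mem_ball, dist_zero_right, Real.norm_eq_abs] at h1
  rw [Metric.mem_ball, dist_zero_right]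
  have h2 : ‖∑ n ∈ t, v n‖ ^ 2 < ε ^ 2 :=
    lt_of_le_of_lt (h t) (lt_of_le_of_lt (le_abs_self _) h1)
  exact lt_of_pow_lt_pow_left₀ 2 hε.le h2

/-- if `⟨φ_n, ψ_n⟩ = 1`, there is a positive invertible `T` with
`Tφ_n = ψ_n`, and `(φ, ψ)` and `(ψ, φ)` are both effective pairs, then the
auxiliary sequences `g, g̃` are canonical dual frames and `T⁻¹` is the frame
operator of `g` (so `g̃_n = T g_n`). -/
theorem canonical_dual_aux_of_symmetric_effective_pair
    (φ ψ g gt : ℕ → H) (T : H ≃L[ℂ] H)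
    (hφdense : (Submodule.span ℂ (Set.range φ)).topologicalClosure = ⊤)
    (hψdense : (Submodule.span ℂ (Set.range ψ)).topologicalClosure = ⊤)
    (hpair : ∀ n, ⟪ψ n, φ n⟫ = 1)
    (hTpos : (T : H →L[ℂ] H).IsPositive)
    (hTφ : ∀ n, T (φ n) = ψ n)
    (hg0 : g 0 = φ 0)
    (hg : ∀ n, g (n + 1)
        = φ (n + 1) - ∑ k ∈ Finset.range (n + 1), ⟪ψ k, φ (n + 1)⟫ • g k)
    (hgt0 : gt 0 = ψ 0)
    (hgt : ∀ n, gt (n + 1)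
        = ψ (n + 1) - ∑ k ∈ Finset.range (n + 1), ⟪φ k, ψ (n + 1)⟫ • gt k)
    (heff : EffectivePair φ ψ) (heff' : EffectivePair ψ φ) :
    IsFrame g ∧ (∀ x : H, HasSum (fun n => ⟪g n, x⟫ • g n) (T.symm x)) ∧
      ∀ n, gt n = T (g n) := by
  -- basic symmetry facts
  have hsymT : ∀ a b : H, ⟪(T : H →L[ℂ] H) a, b⟫ = ⟪a, (T : H →L[ℂ] H) b⟫ :=
    hTpos.1
  have hsymT' : ∀ a b : H, ⟪T a, b⟫ = ⟪a, T b⟫ := hsymT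
  have hsymS : ∀ a b : H, ⟪T.symm a, b⟫ = ⟪a, T.symm b⟫ := by
    intro a b
    calc ⟪T.symm a, b⟫ = ⟪T.symm a, T (T.symm b)⟫ := by rw [T.apply_symm_apply]
      _ = ⟪T (T.symm a), T.symm b⟫ := (hsymT' _ _).symm
      _ = ⟪a, T.symm b⟫ := by rw [T.apply_symm_apply]
  have hTψ : ∀ n, T.symm (ψ n) = φ n := fun n => by rw [← hTφ n, T.symm_apply_apply]
  have hφψ : ∀ n, ⟪φ n, ψ n⟫ = 1 := fun n => by
    rw [← inner_conj_symm, hpair n, map_one]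
  -- weak convergence of the partial frame-operator sums
  have hweak : ∀ x y : H,
      Tendsto (fun N => ∑ k ∈ Finset.range (N + 1), ⟪x, g k⟫ * ⟪g k, y⟫)
        atTop (𝓝 ⟪T.symm x, y⟫) := by
    intro x y
    have h1 : Tendsto (fun N => x - kacz φ ψ x N) atTop (𝓝 (x - x)) :=
      tendsto_const_nhds.sub (heff x)
    rw [sub_self] at h1
    have h2 : Tendsto (fun N => y - kacz φ ψ y N) atTop (𝓝 (y - y)) :=
      tendsto_const_nhds.sub (heff y)
    rw [sub_self] at h2
    have h1' : Tendsto (fun N => T.symm (x - kacz φ ψ x N)) atTop (𝓝 (T.symm 0)) :=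
      (T.symm.continuous.tendsto 0).comp h1
    rw [map_zero] at h1'
    have h3 : Tendsto
        (fun N => (⟪T.symm (x - kacz φ ψ x N), y - kacz φ ψ y N⟫ : ℂ))
        atTop (𝓝 (⟪(0 : H), (0 : H)⟫ : ℂ)) := h1'.inner h2
    rw [inner_zero_left] at h3
    have h4 : (fun N => ∑ k ∈ Finset.range (N + 1), ⟪x, g k⟫ * ⟪g k, y⟫)
        = fun N => ⟪T.symm x, y⟫
          - ⟪T.symm (x - kacz φ ψ x N), y - kacz φ ψ y N⟫ := by
      funext N
      rw [telescope φ ψ g T hg0 hg hTψ hsymS hφψ x y N]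
      ring
    rw [h4]
    have h5 : Tendsto (fun N => (⟪T.symm x, y⟫ : ℂ)
        - ⟪T.symm (x - kacz φ ψ x N), y - kacz φ ψ y N⟫) atTop
        (𝓝 (⟪T.symm x, y⟫ - 0)) := tendsto_const_nhds.sub h3
    rw [sub_zero] at h5
    exact h5
  -- scalar sums
  have hterm : ∀ (y : H) (k : ℕ),
      ⟪y, g k⟫ * ⟪g k, y⟫ = ((‖⟪g k, y⟫‖ ^ 2 : ℝ) : ℂ) := by
    intro y k
    rw [← inner_conj_symm y (g k), mul_comm, Complex.mul_conj]
    rw [Complex.normSq_eq_norm_sq]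
  have hsum_sq : ∀ y : H,
      HasSum (fun n => ‖⟪g n, y⟫‖ ^ 2) (Complex.re ⟪T.symm y, y⟫) := by
    intro y
    have h5 : Tendsto (fun N => ∑ k ∈ Finset.range (N + 1), ‖⟪g k, y⟫‖ ^ 2)
        atTop (𝓝 (Complex.re ⟪T.symm y, y⟫)) := by
      have := (Complex.continuous_re.tendsto _).comp (hweak y y)
      have heq : (fun N => Complex.re (∑ k ∈ Finset.range (N + 1), ⟪y, g k⟫ * ⟪g k, y⟫))
          = fun N => ∑ k ∈ Finset.range (N + 1), ‖⟪g k, y⟫‖ ^ 2 := by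
        funext N
        rw [Complex.re_sum]
        refine Finset.sum_congr rfl fun k _ => ?_
        rw [hterm y k, Complex.ofReal_re]
      rw [← heq]
      exact this
    have h6 : Tendsto (fun N => ∑ k ∈ Finset.range N, ‖⟪g k, y⟫‖ ^ 2)
        atTop (𝓝 (Complex.re ⟪T.symm y, y⟫)) :=
      (tendsto_add_atTop_iff_nat 1).mp h5
    exact (hasSum_iff_tendsto_nat_of_nonneg (fun i => sq_nonneg _) _).mpr h6
  have reinle : ∀ a b : H, Complex.re ⟪a, b⟫ ≤ ‖a‖ * ‖b‖ := fun a b => by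
    simpa using re_inner_le_norm (𝕜 := ℂ) a b
  have selfsq : ∀ a : H, Complex.re ⟪a, a⟫ = ‖a‖ ^ 2 := fun a => by
    simpa using inner_self_eq_norm_sq (𝕜 := ℂ) a
  have resym : ∀ a b : H, Complex.re ⟪a, b⟫ = Complex.re ⟪b, a⟫ := fun a b => by
    simpa using inner_re_symm (𝕜 := ℂ) a b
  -- Bessel bound on finite sets
  set B : ℝ := ‖(T.symm : H →L[ℂ] H)‖ with hBdef
  have hB0 : 0 ≤ B := norm_nonneg _
  have hbessel : ∀ (z : H) (t : Finset ℕ), ∑ n ∈ t, ‖⟪g n, z⟫‖ ^ 2 ≤ B * ‖z‖ ^ 2 := by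
    intro z t
    have h1 : ∑ n ∈ t, ‖⟪g n, z⟫‖ ^ 2 ≤ ∑' n, ‖⟪g n, z⟫‖ ^ 2 :=
      Summable.sum_le_tsum t (fun i _ => sq_nonneg _) (hsum_sq z).summable
    rw [(hsum_sq z).tsum_eq] at h1
    refine h1.trans ?_
    have h2 : Complex.re ⟪T.symm z, z⟫ ≤ ‖T.symm z‖ * ‖z‖ := reinle _ _
    have h3 : ‖T.symm z‖ ≤ B * ‖z‖ := (T.symm : H →L[ℂ] H).le_opNorm z
    nlinarith [norm_nonneg z, norm_nonneg (T.symm z)]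
  -- bound on finite partial sums of the frame-operator series
  have hvec : ∀ (y : H) (t : Finset ℕ),
      ‖∑ n ∈ t, ⟪g n, y⟫ • g n‖ ^ 2 ≤ ∑ n ∈ t, B * ‖⟪g n, y⟫‖ ^ 2 := by
    intro y t
    set z : H := ∑ n ∈ t, ⟪g n, y⟫ • g n with hz
    set X : ℝ := ‖z‖ ^ 2 with hX
    have hX0 : 0 ≤ X := sq_nonneg _
    set P : ℝ := ∑ n ∈ t, ‖⟪g n, y⟫‖ ^ 2 with hP
    have hP0 : 0 ≤ P := Finset.sum_nonneg fun i _ => sq_nonneg _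
    have h1 : (⟪z, z⟫ : ℂ) = ∑ n ∈ t, (starRingEnd ℂ) ⟪g n, y⟫ * ⟪g n, z⟫ := by
      rw [hz, sum_inner]
      exact Finset.sum_congr rfl fun n _ => inner_smul_left _ _ _
    set S : ℝ := ∑ n ∈ t, ‖⟪g n, y⟫‖ * ‖⟪g n, z⟫‖ with hS
    have hXS : X ≤ S := by
      have h2 : X = Complex.re ⟪z, z⟫ := (selfsq z).symm
      rw [h2, h1]
      refine (Complex.re_le_norm _).trans ?_
      refine (norm_sum_le _ _).trans ?_
      rw [hS]
      refine Finset.sum_le_sum fun n _ => ?_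
      rw [norm_mul, RCLike.norm_conj]
    have hS0 : 0 ≤ S := hX0.trans hXS
    have hCS : S ^ 2 ≤ P * ∑ n ∈ t, ‖⟪g n, z⟫‖ ^ 2 := by
      have := Finset.sum_mul_sq_le_sq_mul_sq t (fun n => ‖⟪g n, y⟫‖)
        (fun n => ‖⟪g n, z⟫‖)
      simpa [hS, hP] using this
    have hCS2 : S ^ 2 ≤ P * (B * X) :=
      hCS.trans (mul_le_mul_of_nonneg_left (hbessel z t) hP0)
    have hXX : X * X ≤ (B * P) * X := by nlinarith
    have hgoal : X ≤ B * P := by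
      rcases eq_or_lt_of_le hX0 with h | h
      · rw [← h]; positivity
      · exact le_of_mul_le_mul_right hXX h
    calc ‖∑ n ∈ t, ⟪g n, y⟫ • g n‖ ^ 2 = X := rfl
      _ ≤ B * P := hgoal
      _ = ∑ n ∈ t, B * ‖⟪g n, y⟫‖ ^ 2 := by rw [hP, Finset.mul_sum]
  -- summability of the frame-operator series
  have hsummable : ∀ y : H, Summable fun n => ⟪g n, y⟫ • g n := by
    intro y
    exact summable_of_sq_le _ (fun n => B * ‖⟪g n, y⟫‖ ^ 2)
      ((hsum_sq y).summable.mul_left B) (hvec y)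
  -- identification of the sum
  have hhassum : ∀ y : H, HasSum (fun n => ⟪g n, y⟫ • g n) (T.symm y) := by
    intro y
    obtain ⟨L, hL⟩ := hsummable y
    have hLeq : L = T.symm y := by
      refine ext_inner_left ℂ fun w => ?_
      have t1 : Tendsto (fun N => (⟪w, ∑ n ∈ Finset.range N, ⟪g n, y⟫ • g n⟫ : ℂ))
          atTop (𝓝 ⟪w, L⟫) := tendsto_const_nhds.inner hL.tendsto_sum_nat
      have t1' : Tendsto (fun N => (⟪w, ∑ n ∈ Finset.range (N + 1), ⟪g n, y⟫ • g n⟫ : ℂ))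
          atTop (𝓝 ⟪w, L⟫) := t1.comp (tendsto_add_atTop_nat 1)
      have heq2 : (fun N => (⟪w, ∑ n ∈ Finset.range (N + 1), ⟪g n, y⟫ • g n⟫ : ℂ))
          = fun N => ∑ k ∈ Finset.range (N + 1), ⟪w, g k⟫ * ⟪g k, y⟫ := by
        funext N
        rw [inner_sum]
        exact Finset.sum_congr rfl fun n _ => by
          rw [inner_smul_right]; ring
      rw [heq2] at t1'
      have t2 := hweak w y
      have := tendsto_nhds_unique t1' t2
      rw [this, hsymS]
    rw [← hLeq]; exact hL
  refine ⟨?_, hhassum, gt_eq_T_g φ ψ g gt T hsymT hTφ hg0 hg hgt0 hgt⟩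
  -- the frame bounds
  refine ⟨(‖(T : H →L[ℂ] H)‖ + 1)⁻¹, B + 1, by positivity, ?_, ?_⟩
  · have h1 : (‖(T : H →L[ℂ] H)‖ + 1)⁻¹ ≤ 1 := by
      rw [inv_le_one_iff₀]
      right
      linarith [norm_nonneg (T : H →L[ℂ] H)]
    linarith
  intro x
  have htsum : ∑' n, ‖⟪g n, x⟫‖ ^ 2 = Complex.re ⟪T.symm x, x⟫ := (hsum_sq x).tsum_eq
  constructor
  · -- lower frame bound
    rw [htsum]
    set z : H := T.symm x with hzdef
    have hxz : x = T z := (T.apply_symm_apply x).symm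
    have hre : Complex.re ⟪T.symm x, x⟫ = Complex.re ⟪T z, z⟫ := by
      rw [hxz, T.symm_apply_apply, resym]
    have hcs := pos_inner_cs (T : H →L[ℂ] H) hTpos z (T z)
    have hTz : ((T : H →L[ℂ] H) z : H) = T z := rfl
    rw [hTz] at hcs
    have he1 : Complex.re ⟪T z, T z⟫ = ‖T z‖ ^ 2 := selfsq _
    have he2 : Complex.re ⟪(T : H →L[ℂ] H) (T z), T z⟫
        ≤ ‖(T : H →L[ℂ] H)‖ * ‖T z‖ ^ 2 := by
      have h3 : ‖(T : H →L[ℂ] H) (T z)‖ ≤ ‖(T : H →L[ℂ] H)‖ * ‖T z‖ :=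
        (T : H →L[ℂ] H).le_opNorm (T z)
      calc Complex.re ⟪(T : H →L[ℂ] H) (T z), T z⟫
          ≤ ‖(T : H →L[ℂ] H) (T z)‖ * ‖T z‖ := reinle _ _
        _ ≤ (‖(T : H →L[ℂ] H)‖ * ‖T z‖) * ‖T z‖ :=
            mul_le_mul_of_nonneg_right h3 (norm_nonneg _)
        _ = ‖(T : H →L[ℂ] H)‖ * ‖T z‖ ^ 2 := by ring
    have hpos2 : 0 ≤ Complex.re ⟪T z, z⟫ := by
      simpa [ContinuousLinearMap.reApplyInnerSelf_apply] using hTpos.2 z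
    have hnormT0 : 0 ≤ ‖(T : H →L[ℂ] H)‖ := norm_nonneg _
    have hkey : ‖T z‖ ^ 2 ≤ (‖(T : H →L[ℂ] H)‖ + 1) * Complex.re ⟪T z, z⟫ := by
      rcases eq_or_lt_of_le (sq_nonneg ‖T z‖) with h | h
      · rw [← h]; positivity
      · nlinarith [hcs, he1, he2, mul_le_mul_of_nonneg_left he2 hpos2,
          mul_nonneg hpos2 h.le]
    rw [hre, inv_mul_le_iff₀ (by positivity), hxz]
    exact hkey
  · -- upper frame bound
    rw [htsum]
    have h2 : Complex.re ⟪T.symm x, x⟫ ≤ ‖T.symm x‖ * ‖x‖ := reinle _ _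
    have h3 : ‖T.symm x‖ ≤ B * ‖x‖ := (T.symm : H →L[ℂ] H).le_opNorm x
    nlinarith [norm_nonneg x, norm_nonneg (T.symm x)]
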